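/- Let X be a Banach space and T : X → X an (a,b,α)-enriched interpolative Kannan type operator. Then T has a unique fixed point. -/

import Mathlib

theorem kannan_aux {E : Type*} [NormedAddCommGroup E] [NormedSpace ℝ E] [CompleteSpace E]
    (S : E → E) (a α : ℝ) (ha0 : 0 ≤ a) (ha1 : a < 1) (hα0 : 0 < α) (hα1 : α < 1)
    (hS : ∀ x y : E, ‖S x - S y‖ ≤ a * ‖x - S x‖ ^ α * ‖y - S y‖ ^ (1 - α)) :
    ∃! x : E, S x = x := by
  have hexp : ∀ p : ℝ, 0 ≤ p → p ^ α * p ^ (1 - α) = p := by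
    intro p hp
    rw [← Real.rpow_add' hp (by norm_num)]
    norm_num
  -- key contraction-type estimate along the orbit
  have key : ∀ u : E, ‖S u - S (S u)‖ ≤ a * ‖u - S u‖ := by
    intro u
    have h := hS u (S u)
    set p := ‖u - S u‖ with hp
    set q := ‖S u - S (S u)‖ with hq
    have hp0 : 0 ≤ p := norm_nonneg _
    have hq0 : 0 ≤ q := norm_nonneg _
    by_cases hpq : q ≤ p
    · calc q ≤ a * p ^ α * q ^ (1 - α) := h
        _ ≤ a * p ^ α * p ^ (1 - α) :=
            mul_le_mul_of_nonneg_left (Real.rpow_le_rpow hq0 hpq (by linarith))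
              (by positivity)
        _ = a * p := by rw [mul_assoc, hexp p hp0]
    · push_neg at hpq
      have h2 : q ≤ a * q := by
        calc q ≤ a * p ^ α * q ^ (1 - α) := h
          _ ≤ a * q ^ α * q ^ (1 - α) :=
              mul_le_mul_of_nonneg_right
                (mul_le_mul_of_nonneg_left (Real.rpow_le_rpow hp0 hpq.le hα0.le) ha0)
                (Real.rpow_nonneg hq0 _)
          _ = a * q := by rw [mul_assoc, hexp q hq0]
      nlinarith
  set x : ℕ → E := fun n => S^[n] 0 with hx
  have hxsucc : ∀ n : ℕ, x (n + 1) = S (x n) := by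
    intro n
    simp [hx, Function.iterate_succ_apply' S n 0]
  set f : ℕ → ℝ := fun n => ‖x n - x (n + 1)‖ with hf
  have hfgeo : ∀ n : ℕ, f n ≤ a ^ n * f 0 := by
    intro n
    induction n with
    | zero => simp
    | succ n ih =>
      have h1 : f (n + 1) ≤ a * f n := by
        have := key (x n)
        simpa [hf, hxsucc] using this
      calc f (n + 1) ≤ a * f n := h1
        _ ≤ a * (a ^ n * f 0) := by
            have : (0:ℝ) ≤ f n := norm_nonneg _
            nlinarith
        _ = a ^ (n + 1) * f 0 := by ring
  have hcauchy : CauchySeq x := by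
    apply cauchySeq_of_le_geometric a (f 0) ha1
    intro n
    rw [dist_eq_norm]
    calc ‖x n - x (n + 1)‖ = f n := rfl
      _ ≤ a ^ n * f 0 := hfgeo n
      _ = f 0 * a ^ n := by ring
  obtain ⟨z, hz⟩ := cauchySeq_tendsto_of_complete hcauchy
  -- show S z = z
  have hbound : ∀ n : ℕ, ‖x (n + 1) - S z‖ ≤
      (a * f 0 ^ α * ‖z - S z‖ ^ (1 - α)) * (a ^ α) ^ n := by
    intro n
    have h := hS (x n) z
    rw [← hxsucc n] at h
    have h2 : ‖x n - x (n + 1)‖ ^ α ≤ (a ^ n * f 0) ^ α :=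
      Real.rpow_le_rpow (norm_nonneg _) (hfgeo n) hα0.le
    have h3 : (a ^ n * f 0) ^ α = (a ^ α) ^ n * f 0 ^ α := by
      rw [Real.mul_rpow (pow_nonneg ha0 n) (norm_nonneg _),
        ← Real.rpow_natCast a n, ← Real.rpow_mul ha0, mul_comm (n:ℝ) α,
        Real.rpow_mul ha0, Real.rpow_natCast]
    calc ‖x (n + 1) - S z‖ ≤ a * ‖x n - x (n + 1)‖ ^ α * ‖z - S z‖ ^ (1 - α) := h
      _ ≤ a * ((a ^ α) ^ n * f 0 ^ α) * ‖z - S z‖ ^ (1 - α) := by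
          rw [← h3]
          gcongr
      _ = (a * f 0 ^ α * ‖z - S z‖ ^ (1 - α)) * (a ^ α) ^ n := by ring
  have hr1 : a ^ α < 1 := Real.rpow_lt_one ha0 ha1 hα0
  have hr0 : (0:ℝ) ≤ a ^ α := Real.rpow_nonneg ha0 _
  have htend0 : Filter.Tendsto (fun n : ℕ =>
      (a * f 0 ^ α * ‖z - S z‖ ^ (1 - α)) * (a ^ α) ^ n) Filter.atTop (nhds 0) := by
    have := tendsto_pow_atTop_nhds_zero_of_lt_one hr0 hr1
    simpa using this.const_mul (a * f 0 ^ α * ‖z - S z‖ ^ (1 - α))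
  have hnormtend : Filter.Tendsto (fun n : ℕ => ‖x (n + 1) - S z‖)
      Filter.atTop (nhds 0) :=
    squeeze_zero (fun n => norm_nonneg _) hbound htend0
  have htendSz : Filter.Tendsto (fun n : ℕ => x (n + 1)) Filter.atTop (nhds (S z)) :=
    tendsto_iff_norm_sub_tendsto_zero.2 hnormtend
  have htendz : Filter.Tendsto (fun n : ℕ => x (n + 1)) Filter.atTop (nhds z) :=
    hz.comp (Filter.tendsto_add_atTop_nat 1)
  have hfix : S z = z := tendsto_nhds_unique htendSz htendz
  refine ⟨z, hfix, ?_⟩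
  intro y hy
  have h := hS y z
  rw [hy, hfix] at h
  simp only [sub_self, norm_zero] at h
  rw [Real.zero_rpow hα0.ne', Real.zero_rpow (by linarith : (1:ℝ) - α ≠ 0)] at h
  simp at h
  exact sub_eq_zero.1 h

theorem enriched_interpolative_kannan_fixed_point
    {E : Type*} [NormedAddCommGroup E] [NormedSpace ℝ E] [CompleteSpace E]
    (T : E → E) (a b α : ℝ) (hb : 0 ≤ b) (ha0 : 0 ≤ a) (ha1 : a < 1)
    (hα0 : 0 < α) (hα1 : α < 1)
    (hT : ∀ x y : E, ‖b • (x - y) + (T x - T y)‖ ≤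
      a * ‖x - T x‖ ^ α * ‖y - T y‖ ^ (1 - α)) :
    ∃! xs : E, T xs = xs := by
  set l : ℝ := (b + 1)⁻¹ with hl
  have hb1 : (0:ℝ) < b + 1 := by linarith
  have hl0 : 0 < l := by positivity
  have hlb : 1 - l = l * b := by
    have hinv : (b + 1) * (b + 1)⁻¹ = 1 := mul_inv_cancel₀ hb1.ne'
    rw [hl]; linear_combination -hinv
  clear_value l
  set S : E → E := fun u => (1 - l) • u + l • T u with hSdef
  have hsub : ∀ u : E, u - S u = l • (u - T u) := by
    intro u
    simp only [hSdef]
    module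
  have hdiff : ∀ x y : E, S x - S y = l • (b • (x - y) + (T x - T y)) := by
    intro x y
    have h1 : S x - S y = (1 - l) • (x - y) + l • (T x - T y) := by
      simp only [hSdef]
      module
    rw [h1, hlb, mul_smul, ← smul_add]
  have hS : ∀ x y : E, ‖S x - S y‖ ≤ a * ‖x - S x‖ ^ α * ‖y - S y‖ ^ (1 - α) := by
    intro x y
    have hnorm : ∀ v : E, ‖l • v‖ = l * ‖v‖ := by
      intro v
      rw [norm_smul, Real.norm_of_nonneg hl0.le]
    calc ‖S x - S y‖ = l * ‖b • (x - y) + (T x - T y)‖ := by rw [hdiff, hnorm]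
      _ ≤ l * (a * ‖x - T x‖ ^ α * ‖y - T y‖ ^ (1 - α)) := by
          have := hT x y
          nlinarith [hl0.le, hT x y]
      _ = a * (l * ‖x - T x‖) ^ α * (l * ‖y - T y‖) ^ (1 - α) := by
          have hll : l ^ α * l ^ (1 - α) = l := by
            rw [← Real.rpow_add' hl0.le (by norm_num : α + (1 - α) ≠ 0)]
            norm_num
          rw [Real.mul_rpow hl0.le (norm_nonneg _), Real.mul_rpow hl0.le (norm_nonneg _)]
          linear_combination (-(a * ‖x - T x‖ ^ α * ‖y - T y‖ ^ (1 - α))) * hll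
      _ = a * ‖x - S x‖ ^ α * ‖y - S y‖ ^ (1 - α) := by
          rw [hsub x, hsub y, norm_smul, norm_smul, Real.norm_of_nonneg hl0.le]
  obtain ⟨z, hz, huniq⟩ := kannan_aux S a α ha0 ha1 hα0 hα1 hS
  have hequiv : ∀ u : E, S u = u ↔ T u = u := by
    intro u
    constructor
    · intro h
      have h2 : u - S u = 0 := by rw [h, sub_self]
      rw [hsub u] at h2
      rcases smul_eq_zero.1 h2 with h3 | h3
      · exact absurd h3 hl0.ne'
      · rw [sub_eq_zero] at h3; exact h3.symm
    · intro h
      have h2 : l • (u - T u) = 0 := by rw [h, sub_self, smul_zero]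
      rw [← hsub u, sub_eq_zero] at h2
      exact h2.symm
  exact ⟨z, (hequiv z).1 hz, fun y hy => huniq y ((hequiv y).2 hy)⟩
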